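/- For all real x ≥ 0, x^x * exp(-x) * sqrt(2x + 1) ≤ Γ(x+1) ≤ x^x * exp(-x) * sqrt(π(2x + 1)), where Γ is the Gamma function (interpreting 0^0 = 1). -/

import Mathlib

open Real Filter Topology Set Nat

noncomputable def phi (u : ℝ) : ℝ := u * Real.log u


lemma logIneq {w : ℝ} (h0 : 0 ≤ w) (h1 : w < 1) :
    2 * w ≤ Real.log (1 + w) - Real.log (1 - w) := by
  set f : ℝ → ℝ := fun w => Real.log (1 + w) - Real.log (1 - w) - 2 * w with hf
  have key : MonotoneOn f (Ico (0:ℝ) 1) := by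
    have hderiv : ∀ w ∈ Ioo (0:ℝ) 1, HasDerivAt f (1/(1+w) + 1/(1-w) - 2) w := by
      intro w hw
      have h1w : (1:ℝ) + w ≠ 0 := by nlinarith [hw.1, hw.2]
      have h2w : (1:ℝ) - w ≠ 0 := by nlinarith [hw.1, hw.2]
      have d1 : HasDerivAt (fun w : ℝ => Real.log (1 + w)) (1/(1+w)) w := by
        simpa using ((hasDerivAt_id w).const_add 1).log h1w
      have d2 : HasDerivAt (fun w : ℝ => Real.log (1 - w)) (-1/(1-w)) w := by
        simpa using ((hasDerivAt_id w).const_sub 1).log h2w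
      have d3 : HasDerivAt (fun w : ℝ => 2 * w) 2 w := by
        simpa using (hasDerivAt_id w).const_mul 2
      have := (d1.sub d2).sub d3
      refine this.congr_deriv ?_
      ring
    apply monotoneOn_of_deriv_nonneg (convex_Ico 0 1)
    · apply ContinuousOn.sub
      apply ContinuousOn.sub
      · apply ContinuousOn.log (by fun_prop)
        intro w hw; nlinarith [hw.1, hw.2]
      · apply ContinuousOn.log (by fun_prop)
        intro w hw; nlinarith [hw.1, hw.2]
      · fun_prop
    · rw [interior_Ico]
      exact fun w hw => (hderiv w hw).differentiableAt.differentiableWithinAt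
    · rw [interior_Ico]
      intro w hw
      rw [(hderiv w hw).deriv]
      have hw1 : 0 < 1 + w := by nlinarith [hw.1, hw.2]
      have hw2 : 0 < 1 - w := by nlinarith [hw.1, hw.2]
      rw [div_add_div _ _ (ne_of_gt hw1) (ne_of_gt hw2)]
      have : (1:ℝ) * (1-w) + (1+w) * 1 = 2 := by ring
      rw [this]
      rw [sub_nonneg, le_div_iff₀ (by positivity)]
      nlinarith [hw.1, hw.2]
  have h0' : f 0 ≤ f w := key (by simp) (by simp [h0, h1] : w ∈ Ico (0:ℝ) 1) h0
  simp only [hf] at h0'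
  norm_num at h0'
  linarith

lemma keyIneq {u : ℝ} (hu : 1 ≤ u) : 1/u ≤ Real.log (u + 1/2) - Real.log (u - 1/2) := by
  have hu0 : 0 < u := by linarith
  set w : ℝ := 1/(2*u) with hw
  have hw0 : 0 ≤ w := by positivity
  have hw1 : w < 1 := by
    rw [hw, div_lt_one (by linarith)]; linarith
  have e1 : u + 1/2 = u * (1 + w) := by
    rw [hw]; field_simp
  have e2 : u - 1/2 = u * (1 - w) := by
    rw [hw]; field_simp
  have key : 2 * w ≤ Real.log (1 + w) - Real.log (1 - w) := logIneq hw0 hw1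
  have l1 : Real.log (u + 1/2) = Real.log u + Real.log (1 + w) := by
    rw [e1, Real.log_mul (ne_of_gt hu0) (by nlinarith)]
  have l2 : Real.log (u - 1/2) = Real.log u + Real.log (1 - w) := by
    rw [e2, Real.log_mul (ne_of_gt hu0) (by nlinarith)]
  have h2w : 2 * w = 1 / u := by rw [hw]; field_simp
  rw [l1, l2]
  rw [h2w] at key
  linarith


noncomputable def F (u : ℝ) : ℝ := phi (u + 1/2) - phi (u - 1/2) - Real.log u

lemma hasDerivAt_phi_shift (c u : ℝ) (h : 0 < u + c) :
    HasDerivAt (fun t : ℝ => phi (t + c)) (Real.log (u + c) + 1) u := by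
  have d0 : HasDerivAt (fun t : ℝ => t + c) 1 u := (hasDerivAt_id u).add_const c
  have d1 : HasDerivAt (fun v : ℝ => v * Real.log v) (Real.log (u+c) + 1) (u + c) := by
    have := (hasDerivAt_id (u+c)).mul ((hasDerivAt_id (u+c)).log (ne_of_gt h))
    refine this.congr_deriv ?_
    simp [id, mul_inv_cancel₀ (ne_of_gt h)]
  exact (d1.comp u d0).congr_deriv (mul_one _)

lemma F_mono : MonotoneOn F (Ici (1:ℝ)) := by
  have hderiv : ∀ u ∈ Ioi (1:ℝ), HasDerivAt F
      (Real.log (u + 1/2) - Real.log (u - 1/2) - 1/u) u := by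
    intro u hu
    simp only [Set.mem_Ioi] at hu
    have d1 := hasDerivAt_phi_shift (1/2) u (by linarith)
    have d2 := hasDerivAt_phi_shift (-(1/2)) u (by linarith)
    have d3 : HasDerivAt (fun t : ℝ => Real.log t) (1/u) u := by
      simpa using (hasDerivAt_id u).log (by linarith : u ≠ 0)
    have hD := (d1.sub d2).sub d3
    have heq : F = fun t => phi (t + 1/2) - phi (t + -(1/2)) - Real.log t := by
      funext t; simp [F, sub_eq_add_neg]
    rw [heq]
    refine hD.congr_deriv ?_
    have h5 : u + -(1/2) = u - 1/2 := by ring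
    rw [h5]; ring
  apply monotoneOn_of_deriv_nonneg (convex_Ici 1)
  · apply ContinuousOn.sub
    apply ContinuousOn.sub
    · apply ContinuousOn.mul (by fun_prop)
      apply ContinuousOn.log (by fun_prop)
      intro u hu; simp only [Set.mem_Ici] at hu; nlinarith
    · apply ContinuousOn.mul (by fun_prop)
      apply ContinuousOn.log (by fun_prop)
      intro u hu; simp only [Set.mem_Ici] at hu; nlinarith
    · apply ContinuousOn.log (by fun_prop)
      intro u hu; simp only [Set.mem_Ici] at hu; nlinarith
  · rw [interior_Ici]
    exact fun u hu => (hderiv u hu).differentiableAt.differentiableWithinAt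
  · rw [interior_Ici]
    intro u hu
    rw [(hderiv u hu).deriv]
    have := keyIneq (le_of_lt (Set.mem_Ioi.mp hu))
    linarith


lemma logGammaSeq (t : ℝ) (ht : 0 ≤ t) (n : ℕ) (hn : 1 ≤ n) :
    Real.log (Real.GammaSeq (t+1) n)
      = (t+1) * Real.log n + Real.log (n ! : ℝ) -
        ∑ j ∈ Finset.range (n+1), Real.log (t+1+j) := by
  have hn0 : (0:ℝ) < n := by exact_mod_cast hn
  have hprod : ∀ j ∈ Finset.range (n+1), (0:ℝ) < t+1+j := by
    intro j _; positivity
  have hprodpos : (0:ℝ) < ∏ j ∈ Finset.range (n+1), (t+1+(j:ℝ)) :=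
    Finset.prod_pos hprod
  have hfac : (0:ℝ) < (n ! : ℝ) := by exact_mod_cast n.factorial_pos
  have hpow : (0:ℝ) < (n:ℝ) ^ (t+1) := Real.rpow_pos_of_pos hn0 _
  rw [Real.GammaSeq, Real.log_div (by positivity) (ne_of_gt hprodpos),
    Real.log_mul (ne_of_gt hpow) (ne_of_gt hfac),
    Real.log_rpow hn0, Real.log_prod (fun j hj => ne_of_gt (hprod j hj))]

lemma tendsto_aux (a : ℝ) (ha : 0 ≤ a) :
    Tendsto (fun n : ℕ => Real.log n - Real.log (a + n + 3/2)) atTop (𝓝 0) := by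
  have h1 : Tendsto (fun n : ℕ => (a + 3/2)/n + 1) atTop (𝓝 1) := by
    simpa using (tendsto_const_div_atTop_nhds_zero_nat (a+3/2)).add_const 1
  have h2 : Tendsto (fun n : ℕ => Real.log ((a+3/2)/n + 1)) atTop (𝓝 0) := by
    have := (Real.continuousAt_log one_ne_zero).tendsto.comp h1
    simpa [Function.comp_def] using this
  apply Tendsto.congr' _ (by simpa using h2.neg)
  filter_upwards [eventually_ge_atTop 1] with n hn
  have hn0 : (0:ℝ) < n := by exact_mod_cast hn
  have he : (a+3/2)/n + 1 = (a + n + 3/2)/n := by field_simp; ring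
  rw [he, Real.log_div (by positivity) (ne_of_gt hn0)]
  ring



lemma sumBound (x y : ℝ) (hx : 0 ≤ x) (hxy : x ≤ y) (n : ℕ) :
    ∑ j ∈ Finset.range (n+1), (Real.log (y+1+j) - Real.log (x+1+j))
      ≤ (phi (y+n+3/2) - phi (x+n+3/2)) - (phi (y+1/2) - phi (x+1/2)) := by
  have key : ∀ j ∈ Finset.range (n+1),
      Real.log (y+1+j) - Real.log (x+1+j)
        ≤ ((fun j : ℕ => phi (y+j+1/2)) (j+1) - (fun j : ℕ => phi (y+j+1/2)) j)
          - ((fun j : ℕ => phi (x+j+1/2)) (j+1) - (fun j : ℕ => phi (x+j+1/2)) j) := by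
    intro j _
    have hj : (0:ℝ) ≤ j := j.cast_nonneg
    have hxm : x+1+(j:ℝ) ∈ Ici (1:ℝ) := by
      simp only [Set.mem_Ici]; linarith
    have hym : y+1+(j:ℝ) ∈ Ici (1:ℝ) := by
      simp only [Set.mem_Ici]; linarith
    have := F_mono hxm hym (by linarith)
    simp only [F, phi] at this ⊢
    push_cast
    have e1 : y+1+(j:ℝ)+1/2 = y+((j:ℝ)+1)+1/2 := by ring
    have e2 : y+1+(j:ℝ)-1/2 = y+(j:ℝ)+1/2 := by ring
    have e3 : x+1+(j:ℝ)+1/2 = x+((j:ℝ)+1)+1/2 := by ring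
    have e4 : x+1+(j:ℝ)-1/2 = x+(j:ℝ)+1/2 := by ring
    rw [e1, e2, e3, e4] at this
    linarith
  calc ∑ j ∈ Finset.range (n+1), (Real.log (y+1+j) - Real.log (x+1+j))
      ≤ ∑ j ∈ Finset.range (n+1),
        (((fun j : ℕ => phi (y+j+1/2)) (j+1) - (fun j : ℕ => phi (y+j+1/2)) j)
          - ((fun j : ℕ => phi (x+j+1/2)) (j+1) - (fun j : ℕ => phi (x+j+1/2)) j)) :=
        Finset.sum_le_sum key
    _ = (phi (y+n+3/2) - phi (x+n+3/2)) - (phi (y+1/2) - phi (x+1/2)) := by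
        rw [Finset.sum_sub_distrib, Finset.sum_range_sub (fun j : ℕ => phi (y+j+1/2)),
          Finset.sum_range_sub (fun j : ℕ => phi (x+j+1/2))]
        push_cast
        have e1 : y+((n:ℝ)+1)+1/2 = y+n+3/2 := by ring
        have e2 : x+((n:ℝ)+1)+1/2 = x+n+3/2 := by ring
        have e3 : y+(0:ℝ)+1/2 = y+1/2 := by ring
        have e4 : x+(0:ℝ)+1/2 = x+1/2 := by ring
        rw [e1, e2, e3, e4]
        ring


lemma G_mono (x y : ℝ) (hx : 0 ≤ x) (hxy : x ≤ y) :
    Real.log (Real.Gamma (x+1)) - phi (x+1/2) + x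
      ≤ Real.log (Real.Gamma (y+1)) - phi (y+1/2) + y := by
  rcases eq_or_lt_of_le hxy with rfl | hlt
  · exact le_rfl
  have hy : 0 ≤ y := le_trans hx hxy
  -- limits of log GammaSeq
  have hGx : 0 < Real.Gamma (x+1) := Real.Gamma_pos_of_pos (by linarith)
  have hGy : 0 < Real.Gamma (y+1) := Real.Gamma_pos_of_pos (by linarith)
  set D : ℕ → ℝ := fun n => Real.log (Real.GammaSeq (y+1) n) - Real.log (Real.GammaSeq (x+1) n) with hD
  have hDlim : Tendsto D atTop (𝓝 (Real.log (Real.Gamma (y+1)) - Real.log (Real.Gamma (x+1)))) := by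
    apply Tendsto.sub
    · exact ((Real.continuousAt_log (ne_of_gt hGy)).tendsto).comp (Real.GammaSeq_tendsto_Gamma (y+1))
    · exact ((Real.continuousAt_log (ne_of_gt hGx)).tendsto).comp (Real.GammaSeq_tendsto_Gamma (x+1))
  -- mean value theorem
  have mvt : ∀ n : ℕ, ∃ ξ ∈ Ioo x y,
      phi (y + n + 3/2) - phi (x + n + 3/2) = (y - x) * (Real.log (ξ + (n + 3/2)) + 1) := by
    intro n
    set c : ℝ := (n:ℝ) + 3/2 with hc
    have hcpos : ∀ t ∈ Icc x y, 0 < t + c := by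
      intro t ht
      have h1 := ht.1
      have h2 : (0:ℝ) ≤ (n:ℝ) := n.cast_nonneg
      rw [hc]; nlinarith
    have hcont : ContinuousOn (fun t : ℝ => phi (t + c)) (Icc x y) := by
      apply ContinuousOn.mul (by fun_prop)
      apply ContinuousOn.log (by fun_prop)
      intro t ht; exact ne_of_gt (hcpos t ht)
    have hd : ∀ t ∈ Ioo x y, HasDerivAt (fun t : ℝ => phi (t + c)) (Real.log (t+c) + 1) t :=
      fun t ht => hasDerivAt_phi_shift c t (hcpos t (Ioo_subset_Icc_self ht))
    obtain ⟨ξ, hξ, hval⟩ := exists_hasDerivAt_eq_slope (fun t : ℝ => phi (t + c))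
      (fun t => Real.log (t+c) + 1) hlt hcont hd
    refine ⟨ξ, hξ, ?_⟩
    have hyx : y - x ≠ 0 := by linarith
    have e1 : y + (n:ℝ) + 3/2 = y + c := by rw [hc]; ring
    have e2 : x + (n:ℝ) + 3/2 = x + c := by rw [hc]; ring
    rw [e1, e2]
    rw [hval]
    field_simp
  choose ξ hξmem hξval using mvt
  -- E sequence and its limit
  set E : ℕ → ℝ := fun n => (y-x) * Real.log n - (phi (y + n + 3/2) - phi (x + n + 3/2)) with hE
  have hElim : Tendsto E atTop (𝓝 (-(y-x))) := by
    have hEeq : ∀ n : ℕ, E n = (y-x) * ((Real.log n - Real.log (ξ n + (n + 3/2))) - 1) := by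
      intro n
      rw [hE]
      simp only
      rw [hξval n]
      ring
    have hsq : Tendsto (fun n : ℕ => Real.log n - Real.log (ξ n + (n + 3/2))) atTop (𝓝 0) := by
      apply tendsto_of_tendsto_of_tendsto_of_le_of_le (tendsto_aux y hy) (tendsto_aux x hx)
      · intro n
        have h1 : ξ n + ((n:ℝ) + 3/2) ≤ y + (n:ℝ) + 3/2 := by
          have := (hξmem n).2; linarith
        have hpos : (0:ℝ) < ξ n + ((n:ℝ) + 3/2) := by
          have := (hξmem n).1
          nlinarith [show (0:ℝ) ≤ (n:ℝ) from n.cast_nonneg, hx]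
        have hll := Real.log_le_log hpos h1
        linarith
      · intro n
        have h1 : x + (n:ℝ) + 3/2 ≤ ξ n + ((n:ℝ) + 3/2) := by
          have := (hξmem n).1; linarith
        have hpos : (0:ℝ) < x + (n:ℝ) + 3/2 := by
          nlinarith [show (0:ℝ) ≤ (n:ℝ) from n.cast_nonneg, hx]
        have hll := Real.log_le_log hpos h1
        linarith
    have hfin := (hsq.sub_const 1).const_mul (y-x)
    have : Tendsto (fun n : ℕ => (y-x) * ((Real.log n - Real.log (ξ n + (n + 3/2))) - 1))
        atTop (𝓝 (-(y-x))) := by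
      convert hfin using 2
      ring
    exact this.congr (fun n => (hEeq n).symm)
  -- eventual inequality E + const ≤ D
  have hDlow : ∀ᶠ n in atTop, E n + (phi (y+1/2) - phi (x+1/2)) ≤ D n := by
    filter_upwards [eventually_ge_atTop 1] with n hn
    have hsb := sumBound x y hx hxy n
    have hsplit : ∑ j ∈ Finset.range (n+1), (Real.log (y+1+j) - Real.log (x+1+j))
        = ∑ j ∈ Finset.range (n+1), Real.log (y+1+j)
          - ∑ j ∈ Finset.range (n+1), Real.log (x+1+j) := Finset.sum_sub_distrib _ _
    have hDn : D n = (y-x) * Real.log n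
        - (∑ j ∈ Finset.range (n+1), Real.log (y+1+j)
            - ∑ j ∈ Finset.range (n+1), Real.log (x+1+j)) := by
      rw [hD]
      simp only
      rw [logGammaSeq x hx n hn, logGammaSeq y hy n hn]
      ring
    rw [hDn, hE]
    simp only
    rw [← hsplit] at *
    linarith
  have hfinal := le_of_tendsto_of_tendsto (hElim.add_const (phi (y+1/2) - phi (x+1/2))) hDlim hDlow
  linarith


lemma G_tendsto :
    Tendsto (fun n : ℕ => Real.log (Real.Gamma ((n:ℝ)+1)) - phi ((n:ℝ)+1/2) + n) atTop
      (𝓝 (Real.log (Real.sqrt π) + (1/2)*Real.log 2 - 1/2)) := by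
  have t1 : Tendsto (fun n : ℕ => Real.log (Stirling.stirlingSeq n)) atTop (𝓝 (Real.log (Real.sqrt π))) :=
    ((Real.continuousAt_log (ne_of_gt (Real.sqrt_pos.mpr Real.pi_pos))).tendsto).comp
      Stirling.tendsto_stirlingSeq_sqrt_pi
  have t2 : Tendsto (fun n : ℕ => (n:ℝ) * Real.log (1 + (1/2)/n)) atTop (𝓝 (1/2)) :=
    (Real.tendsto_mul_log_one_add_div_atTop (1/2)).comp tendsto_natCast_atTop_atTop
  have t3 : Tendsto (fun n : ℕ => Real.log (1 + (1/2)/n)) atTop (𝓝 0) := by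
    have h1 : Tendsto (fun n : ℕ => 1 + (1/2)/(n:ℝ)) atTop (𝓝 1) := by
      simpa using (tendsto_const_div_atTop_nhds_zero_nat ((1:ℝ)/2)).const_add 1
    simpa [Function.comp_def] using (Real.continuousAt_log one_ne_zero).tendsto.comp h1
  have tB : Tendsto (fun n : ℕ => Real.log (Stirling.stirlingSeq n) + (1/2)*Real.log 2
      - (n:ℝ)*Real.log (1+(1/2)/n) - (1/2)*Real.log (1+(1/2)/n)) atTop
      (𝓝 (Real.log (Real.sqrt π) + (1/2)*Real.log 2 - 1/2)) := by
    have := ((t1.add_const ((1/2)*Real.log 2)).sub t2).sub (t3.const_mul (1/2))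
    simpa using this
  apply tB.congr'
  filter_upwards [eventually_ge_atTop 1] with n hn
  have hn0 : (0:ℝ) < n := by exact_mod_cast hn
  have hfac : (0:ℝ) < (n ! : ℝ) := by exact_mod_cast n.factorial_pos
  have hden : (0:ℝ) < Real.sqrt (2*n) * ((n:ℝ)/Real.exp 1)^n := by positivity
  have hsfac : (n ! : ℝ) = Stirling.stirlingSeq n * (Real.sqrt (2*n) * ((n:ℝ)/Real.exp 1)^n) := by
    rw [Stirling.stirlingSeq]
    field_simp
  have hΓ : Real.Gamma ((n:ℝ)+1) = (n ! : ℝ) := Real.Gamma_nat_eq_factorial n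
  have hsspos : 0 < Stirling.stirlingSeq n := by
    rw [Stirling.stirlingSeq]; positivity
  have hlogfac : Real.log (n ! : ℝ) = Real.log (Stirling.stirlingSeq n)
      + ((1/2)*(Real.log 2 + Real.log n) + (n:ℝ)*(Real.log n - 1)) := by
    rw [hsfac, Real.log_mul (ne_of_gt hsspos) (ne_of_gt hden),
      Real.log_mul (ne_of_gt (Real.sqrt_pos.mpr (by positivity))) (by positivity),
      Real.log_sqrt (by positivity), Real.log_pow, Real.log_mul (by norm_num) (ne_of_gt hn0),
      Real.log_div (ne_of_gt hn0) (Real.exp_ne_zero 1), Real.log_exp]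
    push_cast
    ring
  have hloghalf : Real.log ((n:ℝ)+1/2) = Real.log n + Real.log (1+(1/2)/n) := by
    rw [← Real.log_mul (ne_of_gt hn0) (by positivity)]
    congr 1
    field_simp
  rw [hΓ, hlogfac, phi, hloghalf]
  ring


lemma G_lb (x : ℝ) (hx : 0 ≤ x) :
    (1/2) * Real.log 2 ≤ Real.log (Real.Gamma (x+1)) - phi (x+1/2) + x := by
  have h := G_mono 0 x le_rfl hx
  have h0 : Real.log (Real.Gamma (0+1)) - phi (0+1/2) + 0 = (1/2) * Real.log 2 := by
    norm_num [Real.Gamma_one, phi]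
    rw [show (1:ℝ)/2 = 2⁻¹ by norm_num, Real.log_inv]
    ring
  linarith [h0 ▸ h]

lemma G_ub (x : ℝ) (hx : 0 ≤ x) :
    Real.log (Real.Gamma (x+1)) - phi (x+1/2) + x
      ≤ Real.log (Real.sqrt π) + (1/2)*Real.log 2 - 1/2 := by
  apply ge_of_tendsto G_tendsto
  filter_upwards [eventually_ge_atTop ⌈x⌉₊] with n hn
  exact G_mono x n hx (le_trans (Nat.le_ceil x) (by exact_mod_cast hn))

theorem stmt_1 (x : ℝ) (hx : 0 ≤ x) :
    x ^ x * Real.exp (-x) * Real.sqrt (2 * x + 1) ≤ Real.Gamma (x + 1) ∧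
    Real.Gamma (x + 1) ≤ x ^ x * Real.exp (-x) * Real.sqrt (Real.pi * (2 * x + 1)) := by
  rcases eq_or_lt_of_le hx with rfl | hx0
  · norm_num [Real.Gamma_one]
    linarith [Real.pi_gt_three]
  have hG : 0 < Real.Gamma (x+1) := Real.Gamma_pos_of_pos (by linarith)
  have hxh : (0:ℝ) < x + 1/2 := by linarith
  have hlogsplit : Real.log (2*x+1) = Real.log 2 + Real.log (x+1/2) := by
    rw [show 2*x+1 = 2*(x+1/2) by ring, Real.log_mul (by norm_num) (ne_of_gt hxh)]
  have hrw : ∀ c : ℝ, 0 < c → x ^ x * Real.exp (-x) * Real.sqrt c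
      = Real.exp (x * Real.log x - x + (1/2) * Real.log c) := by
    intro c hc
    rw [Real.rpow_def_of_pos hx0, ← Real.exp_log (Real.sqrt_pos.mpr hc), Real.log_sqrt hc.le,
      ← Real.exp_add, ← Real.exp_add]
    ring_nf
  constructor
  · -- lower bound
    rw [hrw (2*x+1) (by linarith), ← Real.exp_log hG, Real.exp_le_exp]
    have hlb := G_lb x hx
    have hmono : x * Real.log x ≤ x * Real.log (x+1/2) :=
      mul_le_mul_of_nonneg_left (Real.log_le_log hx0 (by linarith)) hx
    simp only [phi] at hlb
    rw [hlogsplit]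
    nlinarith [hlb, hmono]
  · -- upper bound
    rw [hrw (π*(2*x+1)) (by positivity), ← Real.exp_log hG, Real.exp_le_exp]
    have hub := G_ub x hx
    simp only [phi] at hub
    have hπ : Real.log (π*(2*x+1)) = Real.log π + Real.log 2 + Real.log (x+1/2) := by
      rw [Real.log_mul (ne_of_gt Real.pi_pos) (by linarith), hlogsplit]; ring
    have hsqrtπ : Real.log (Real.sqrt π) = (1/2) * Real.log π := by
      rw [Real.log_sqrt Real.pi_pos.le]; ring
    have hkey : x * (Real.log (x+1/2) - Real.log x) ≤ 1/2 := by
      have hdiv : Real.log (x+1/2) - Real.log x = Real.log ((x+1/2)/x) := by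
        rw [Real.log_div (ne_of_gt hxh) (ne_of_gt hx0)]
      have hb : Real.log ((x+1/2)/x) ≤ (x+1/2)/x - 1 :=
        Real.log_le_sub_one_of_pos (by positivity)
      have he : (x+1/2)/x - 1 = 1/(2*x) := by field_simp; ring
      calc x * (Real.log (x+1/2) - Real.log x) ≤ x * (1/(2*x)) := by
            rw [hdiv]
            exact mul_le_mul_of_nonneg_left (he ▸ hb) hx
        _ = 1/2 := by field_simp
    rw [hπ]
    rw [hsqrtπ] at hub
    nlinarith [hub, hkey]
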